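/- arXiv:2010.00754 — 2 statements merged into one kernel-verified Lean document; each statement's English description precedes it below -/
import Mathlib

section
/- Let λ > 0 and S_1 ≤ S_2 ≤ … ≤ S_m with all S_k > 0 and λS_k < 1. Any minimizer φ* of G(φ) = Σ_k (φ_k S_k)/(1 - φ_k λS_k) over the simplex satisfies φ*_1 ≥ φ*_2 ≥ … ≥ φ*_m. -/
lemma conv_lem (lam s a b : ℝ) (hlam : 0 < lam) (hs : 0 < s) (hls : lam*s < 1)
    (ha : 0 ≤ a) (hab : a < b) (hb : b ≤ 1) :
    2 * (((a+b)/2) * s / (1 - ((a+b)/2)*lam*s)) <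
      a*s/(1-a*lam*s) + b*s/(1-b*lam*s) := by
  have hls0 : 0 < lam*s := mul_pos hlam hs
  have d1 : 0 < 1 - a*lam*s := by nlinarith
  have d2 : 0 < 1 - b*lam*s := by nlinarith
  have dc : 0 < 1 - ((a+b)/2)*lam*s := by nlinarith
  rw [← mul_div_assoc, div_add_div _ _ d1.ne' d2.ne',
    div_lt_div_iff₀ dc (mul_pos d1 d2)]
  nlinarith [mul_pos (mul_pos hs hls0) (mul_pos (sub_pos.2 hab) (sub_pos.2 hab))]

lemma super_lem (lam s t a b : ℝ) (hlam : 0 < lam) (hs : 0 < s) (hst : s ≤ t)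
    (hlt : lam*t < 1) (ha : 0 ≤ a) (hab : a ≤ b) (hb : b ≤ 1) :
    b*s/(1-b*lam*s) + a*t/(1-a*lam*t) ≤ a*s/(1-a*lam*s) + b*t/(1-b*lam*t) := by
  have ht : 0 < t := lt_of_lt_of_le hs hst
  have hls : lam*s < 1 := by nlinarith
  have d1 : 0 < 1 - a*lam*s := by nlinarith [mul_pos hlam hs]
  have d2 : 0 < 1 - b*lam*s := by nlinarith [mul_pos hlam hs]
  have d3 : 0 < 1 - a*lam*t := by nlinarith [mul_pos hlam ht]
  have d4 : 0 < 1 - b*lam*t := by nlinarith [mul_pos hlam ht]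
  have hprod : (t-s)*(1-(a*lam*t)*(b*lam*s)) ≥ 0 := by
    have h5 : a*lam*t ≤ lam*t := by nlinarith [mul_pos hlam ht]
    have h6 : b*lam*s ≤ lam*s := by nlinarith [mul_pos hlam hs]
    have h8 : 0 ≤ b*lam*s := mul_nonneg (mul_nonneg (ha.trans hab) hlam.le) hs.le
    have h9 : a*lam*t*(b*lam*s) ≤ (lam*t)*(lam*s) :=
      mul_le_mul h5 h6 h8 (mul_pos hlam ht).le
    have h10 : lam*t*(lam*s) < 1 := by nlinarith [mul_pos hlam hs, mul_pos hlam ht]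
    exact mul_nonneg (sub_nonneg.2 hst) (by linarith)
  rw [div_add_div _ _ d2.ne' d3.ne', div_add_div _ _ d1.ne' d4.ne',
    div_le_div_iff₀ (mul_pos d2 d3) (mul_pos d1 d4)]
  nlinarith [mul_nonneg (sub_nonneg.2 hab) hprod]

/-- Faster queues receive larger optimal traffic fractions: a minimizer's
routing probabilities are ordered oppositely to the service times. -/
theorem faster_gets_more (m : ℕ) (hm : 0 < m) (lam : ℝ) (hlam : 0 < lam)
    (S : Fin m → ℝ) (hS : ∀ k, 0 < S k) (hmono : Monotone S)
    (hstab : ∀ k, lam * S k < 1)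
    (φs : Fin m → ℝ) (hmem : (∀ k, 0 ≤ φs k) ∧ ∑ k, φs k = 1)
    (hmin : ∀ ψ : Fin m → ℝ, (∀ k, 0 ≤ ψ k) → ∑ k, ψ k = 1 →
      ∑ k, (φs k * S k) / (1 - φs k * lam * S k) ≤
      ∑ k, (ψ k * S k) / (1 - ψ k * lam * S k)) :
    ∀ i j : Fin m, i ≤ j → φs j ≤ φs i := by
  obtain ⟨hpos, hsum⟩ := hmem
  intro i j hij
  by_contra hcon
  push_neg at hcon
  have hne : i ≠ j := fun h => absurd (h ▸ hcon) (lt_irrefl _)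
  set a := φs i with ha_def
  set b := φs j with hb_def
  set c := (a+b)/2 with hc_def
  have hb1 : b ≤ 1 := by
    calc b ≤ ∑ k, φs k := Finset.single_le_sum (fun k _ => hpos k) (Finset.mem_univ j)
    _ = 1 := hsum
  set ψ : Fin m → ℝ := Function.update (Function.update φs i c) j c with hψ_def
  have hψi : ψ i = c := by
    rw [hψ_def, Function.update_of_ne hne, Function.update_self]
  have hψj : ψ j = c := by rw [hψ_def, Function.update_self]
  have hψrest : ∀ k, k ≠ i → k ≠ j → ψ k = φs k := fun k hki hkj => by
    rw [hψ_def, Function.update_of_ne hkj, Function.update_of_ne hki]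
  have hc0 : 0 ≤ c := by
    have := hpos i; have := hpos j
    rw [hc_def]; linarith
  have hψpos : ∀ k, 0 ≤ ψ k := by
    intro k
    by_cases hkj : k = j
    · rw [hkj, hψj]; exact hc0
    by_cases hki : k = i
    · rw [hki, hψi]; exact hc0
    · rw [hψrest k hki hkj]; exact hpos k
  have hjmem : j ∈ Finset.univ.erase i := Finset.mem_erase.2 ⟨Ne.symm hne, Finset.mem_univ j⟩
  have key : ∀ g : Fin m → ℝ,
      ∑ k, g k = (∑ k ∈ (Finset.univ.erase i).erase j, g k) + g j + g i := by
    intro g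
    rw [← Finset.sum_erase_add Finset.univ g (Finset.mem_univ i),
      ← Finset.sum_erase_add _ g hjmem]
  have hrest_eq : ∀ g : Fin m → ℝ,
      ∑ k ∈ (Finset.univ.erase i).erase j, (ψ k * S k) / (1 - ψ k * lam * S k) =
      ∑ k ∈ (Finset.univ.erase i).erase j, (φs k * S k) / (1 - φs k * lam * S k) := by
    intro g
    refine Finset.sum_congr rfl fun k hk => ?_
    obtain ⟨hkj, hki, -⟩ := Finset.mem_erase.1 hk |>.imp id (fun h => Finset.mem_erase.1 h)
    rw [hψrest k hki hkj]
  have hrest_sum :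
      ∑ k ∈ (Finset.univ.erase i).erase j, ψ k = ∑ k ∈ (Finset.univ.erase i).erase j, φs k := by
    refine Finset.sum_congr rfl fun k hk => ?_
    obtain ⟨hkj, hki, -⟩ := Finset.mem_erase.1 hk |>.imp id (fun h => Finset.mem_erase.1 h)
    rw [hψrest k hki hkj]
  have hψsum : ∑ k, ψ k = 1 := by
    rw [key ψ, hψi, hψj, hrest_sum, hc_def]
    rw [key φs] at hsum
    linarith
  have hle := hmin ψ hψpos hψsum
  rw [key fun k => (ψ k * S k) / (1 - ψ k * lam * S k),
    key fun k => (φs k * S k) / (1 - φs k * lam * S k)] at hle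
  simp only [hψi, hψj] at hle
  rw [hrest_eq ψ] at hle
  have hSij : S i ≤ S j := hmono hij
  have h1 := conv_lem lam (S i) a b hlam (hS i) (hstab i) (hpos i) hcon hb1
  have h2 := conv_lem lam (S j) a b hlam (hS j) (hstab j) (hpos i) hcon hb1
  have h3 := super_lem lam (S i) (S j) a b hlam (hS i) hSij (hstab j) (hpos i) hcon.le hb1
  rw [← hc_def] at h1 h2
  linarith
end

section
/- Let λ ≥ 0, S_f, S_s > 0 with S_f < S_s, λS_f < 1, λS_s < 1. Then F'(1/2) < 0, where F(φ) = (φS_f)/(1-φλS_f) + ((1-φ)S_s)/(1-(1-φ)λS_s); i.e., at the equal-split point the response time is strictly decreasing in the fraction routed to the fast queue. -/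
/-- At the equal split `φ = 1/2`, the dual heterogeneous response time is
strictly decreasing in the fraction routed to the fast queue. -/
theorem deriv_at_half_neg (Sf Ss lam : ℝ) (hSf : 0 < Sf) (hSs : 0 < Ss)
    (hlam : 0 ≤ lam) (hf : lam * Sf < 1) (hs : lam * Ss < 1) (hlt : Sf < Ss) :
    deriv (fun φ : ℝ => (φ * Sf) / (1 - φ * lam * Sf)
        + ((1 - φ) * Ss) / (1 - (1 - φ) * lam * Ss)) (1 / 2) < 0 := by
  have ha : (0:ℝ) < 1 - (1/2 : ℝ) * lam * Sf := by nlinarith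
  have hb : (0:ℝ) < 1 - (1 - (1/2 : ℝ)) * lam * Ss := by nlinarith
  have h1 : HasDerivAt (fun φ : ℝ => (φ * Sf) / (1 - φ * lam * Sf))
      ((Sf * (1 - (1/2:ℝ) * lam * Sf) - (1/2:ℝ) * Sf * (-(lam * Sf))) /
        (1 - (1/2:ℝ) * lam * Sf) ^ 2) (1/2 : ℝ) := by
    have hu : HasDerivAt (fun φ : ℝ => φ * Sf) Sf (1/2 : ℝ) := by
      simpa using (hasDerivAt_id (1/2 : ℝ)).mul_const Sf
    have hv : HasDerivAt (fun φ : ℝ => 1 - φ * lam * Sf) (-(lam * Sf)) (1/2 : ℝ) := by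
      have : HasDerivAt (fun φ : ℝ => φ * (lam * Sf)) (lam * Sf) (1/2 : ℝ) := by
        simpa using (hasDerivAt_id (1/2 : ℝ)).mul_const (lam * Sf)
      have := (hasDerivAt_const (1/2:ℝ) (1:ℝ)).sub this
      simpa [mul_assoc, Pi.sub_def] using this
    exact hu.div hv ha.ne'
  have h2 : HasDerivAt (fun φ : ℝ => ((1 - φ) * Ss) / (1 - (1 - φ) * lam * Ss))
      ((-Ss * (1 - (1 - (1/2:ℝ)) * lam * Ss) - (1 - (1/2:ℝ)) * Ss * (lam * Ss)) /
        (1 - (1 - (1/2:ℝ)) * lam * Ss) ^ 2) (1/2 : ℝ) := by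
    have hu : HasDerivAt (fun φ : ℝ => (1 - φ) * Ss) (-Ss) (1/2 : ℝ) := by
      have : HasDerivAt (fun φ : ℝ => 1 - φ) (-1 : ℝ) (1/2 : ℝ) := by
        simpa [Pi.sub_def] using (hasDerivAt_const (1/2:ℝ) (1:ℝ)).sub (hasDerivAt_id (1/2:ℝ))
      simpa using this.mul_const Ss
    have hv : HasDerivAt (fun φ : ℝ => 1 - (1 - φ) * lam * Ss) (lam * Ss) (1/2 : ℝ) := by
      have h' : HasDerivAt (fun φ : ℝ => (1 - φ) * (lam * Ss)) (-(lam * Ss)) (1/2 : ℝ) := by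
        have : HasDerivAt (fun φ : ℝ => 1 - φ) (-1 : ℝ) (1/2 : ℝ) := by
          simpa [Pi.sub_def] using (hasDerivAt_const (1/2:ℝ) (1:ℝ)).sub (hasDerivAt_id (1/2:ℝ))
        simpa using this.mul_const (lam * Ss)
      have := (hasDerivAt_const (1/2:ℝ) (1:ℝ)).sub h'
      simpa [mul_assoc, Pi.sub_def] using this
    exact hu.div hv hb.ne'
  have hF := (h1.add h2).deriv
  simp only [Pi.add_def] at hF
  rw [hF]
  set a : ℝ := 1 - (1/2:ℝ) * lam * Sf with ha'
  set b : ℝ := 1 - (1 - (1/2:ℝ)) * lam * Ss with hb'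
  have hba : b ≤ a := by simp only [ha', hb']; nlinarith
  have e : (Sf * a - (1/2:ℝ) * Sf * (-(lam * Sf))) / a ^ 2
      + (-Ss * b - (1 - (1/2:ℝ)) * Ss * (lam * Ss)) / b ^ 2
      = Sf / a ^ 2 - Ss / b ^ 2 := by
    have h1 : Sf * a - (1/2:ℝ) * Sf * (-(lam * Sf)) = Sf := by
      simp only [ha']; ring
    have h2 : -Ss * b - (1 - (1/2:ℝ)) * Ss * (lam * Ss) = -Ss := by
      simp only [hb']; ring
    rw [h1, h2]; ring
  rw [e, sub_neg]
  rw [div_lt_div_iff₀ (by positivity) (by positivity)]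
  have hb2 : b ^ 2 ≤ a ^ 2 := by nlinarith
  calc Sf * b ^ 2 < Ss * b ^ 2 := by nlinarith [pow_pos hb 2]
    _ ≤ Ss * a ^ 2 := by nlinarith
end
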